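/- For every integer n ≥ 4, γ'(S_n) ≤ h(n). -/

import Mathlib

open Equiv Pointwise

/-- A basic set for `G`: a finite set of proper subgroups whose conjugates cover `G`. -/
def IsBasicSet {G : Type*} [Group G] (δ : Finset (Subgroup G)) : Prop :=
  (∀ H ∈ δ, H ≠ ⊤) ∧ ∀ g : G, ∃ H ∈ δ, ∃ k : G, k * g * k⁻¹ ∈ H

/-- The normal covering number `γ(G)`. -/
noncomputable def normalCoveringNumber (G : Type*) [Group G] : ℕ :=
  sInf {m | ∃ δ : Finset (Subgroup G), IsBasicSet δ ∧ δ.card = m}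

/-- A special metacyclic subgroup of `Sₙ`. -/
def IsSpecialMetacyclic {n : ℕ} (M : Subgroup (Equiv.Perm (Fin n))) : Prop :=
  ∃ σ τ : Equiv.Perm (Fin n), τ.IsSwap ∧ Even (orderOf σ) ∧ Commute σ τ ∧
    Subgroup.zpowers σ ⊓ Subgroup.zpowers τ = ⊥ ∧ M = Subgroup.closure {σ, τ}

/-- A special basic set for `Sₙ`. -/
def IsSpecialBasicSet {n : ℕ} (δ : Finset (Subgroup (Equiv.Perm (Fin n)))) : Prop :=
  IsBasicSet δ ∧ ∀ M : Subgroup (Equiv.Perm (Fin n)),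
    (IsCyclic M ∨ IsSpecialMetacyclic M) →
      ∃ H ∈ δ, ∃ k : Equiv.Perm (Fin n), ∀ x ∈ M, k * x * k⁻¹ ∈ H

/-- The special normal covering number `γ'(Sₙ)`. -/
noncomputable def specialNormalCoveringNumber (n : ℕ) : ℕ :=
  sInf {m | ∃ δ : Finset (Subgroup (Equiv.Perm (Fin n))), IsSpecialBasicSet δ ∧ δ.card = m}

/-- An intersective polynomial. -/
def IsIntersective (f : Polynomial ℤ) : Prop :=
  f.Monic ∧ (∀ q : ℚ, Polynomial.aeval q f ≠ 0) ∧
    ∀ m : ℕ, 0 < m → ∃ a : ℤ, (m : ℤ) ∣ f.eval a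

/-- `r(Sₙ)`: the least number of irreducible factors of an intersective polynomial with
Galois group `Sₙ` over `ℚ`. -/
noncomputable def rS (n : ℕ) : ℕ :=
  sInf {k | ∃ f : Polynomial ℤ, IsIntersective f ∧
    (∃ gs : Multiset (Polynomial ℤ), Multiset.card gs = k ∧
      (∀ g ∈ gs, g.Monic ∧ 0 < g.natDegree ∧ Irreducible g) ∧ f = gs.prod) ∧
    Nonempty ((f.map (algebraMap ℤ ℚ)).Gal ≃* Equiv.Perm (Fin n))}

/-- Number of distinct prime factors of `n`. -/
def nuFun (n : ℕ) : ℕ := n.primeFactors.card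

/-- The smallest prime factor `p₁` of `n`. -/
def pOne (n : ℕ) : ℕ := n.minFac

/-- The second smallest prime factor `p₂` of `n`. -/
def pTwo (n : ℕ) : ℕ := (n / (pOne n) ^ (n.factorization (pOne n))).minFac

/-- The function `g`:
`g(n) = (n/2)(1 - 1/p₁)` if `ν(n) = 1, α₁ = 1`;
`g(n) = (n/2)(1 - 1/p₁) + 1` if `ν(n) = 1, α₁ ≥ 2`;
`g(n) = (n/2)(1 - 1/p₁)(1 - 1/p₂) + 1` if `ν(n) = 2, (α₁, α₂) = (1,1)`;
`g(n) = (n/2)(1 - 1/p₁)(1 - 1/p₂) + 2` otherwise.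
(All the divisions below are exact.) -/
def gFun (n : ℕ) : ℕ :=
  if nuFun n = 1 then
    (if n.factorization (pOne n) = 1 then n * (pOne n - 1) / (2 * pOne n)
     else n * (pOne n - 1) / (2 * pOne n) + 1)
  else if nuFun n = 2 ∧ n.factorization (pOne n) = 1 ∧ n.factorization (pTwo n) = 1 then
    n * ((pOne n - 1) * (pTwo n - 1)) / (2 * pOne n * pTwo n) + 1
  else n * ((pOne n - 1) * (pTwo n - 1)) / (2 * pOne n * pTwo n) + 2

/-- `φ(I; n)`: the number of positive integers in the open interval `(a, b)` coprime to `n`. -/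
noncomputable def phiI (a b : ℚ) (n : ℕ) : ℕ :=
  Nat.card {i : ℕ | 0 < i ∧ a < (i : ℚ) ∧ (i : ℚ) < b ∧ Nat.Coprime i n}

/-- The function `h`:
`h(n) = ⌊n/3⌋ + ν(n) + φ((n/3, n/2); n)` for `n` even, and
`h(n) = ⌊n/4⌋ + ν(n) + φ((n/4, n/2); n) + 1` for `n` odd. -/
noncomputable def hFun (n : ℕ) : ℕ :=
  if Even n then n / 3 + nuFun n + phiI ((n : ℚ) / 3) ((n : ℚ) / 2) n
  else n / 4 + nuFun n + phiI ((n : ℚ) / 4) ((n : ℚ) / 2) n + 1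

namespace GammaAux

variable {n : ℕ}

/-- the standard `min k n`-element subset of `Fin n` -/
def stdSet (n k : ℕ) : Finset (Fin n) :=
  (Finset.range (min k n)).attachFin
    (fun m hm => lt_of_lt_of_le (Finset.mem_range.mp hm) (min_le_right _ _))

lemma mem_stdSet {k : ℕ} {i : Fin n} : i ∈ stdSet n k ↔ (i : ℕ) < min k n := by
  simp [stdSet]

lemma card_stdSet (k : ℕ) : (stdSet n k).card = min k n := by
  simp [stdSet]

lemma exists_smul_eq_finset {s t : Finset (Fin n)} (h : s.card = t.card) :
    ∃ g : Equiv.Perm (Fin n), g • s = t := by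
  classical
  have h1 : Fintype.card {x // x ∈ s} = Fintype.card {x // x ∈ t} := by
    simpa [Fintype.card_coe] using h
  have h2 : Fintype.card {x // ¬ x ∈ s} = Fintype.card {x // ¬ x ∈ t} := by
    rw [Fintype.card_subtype_compl, Fintype.card_subtype_compl, h1]
  let e := Fintype.equivOfCardEq h1
  let f := Fintype.equivOfCardEq h2
  refine ⟨Equiv.subtypeCongr e f, ?_⟩
  have hmem : ∀ x (hx : x ∈ s), (Equiv.subtypeCongr e f) x ∈ t := by
    intro x hx
    have hx' : Equiv.subtypeCongr e f x = (e ⟨x, hx⟩ : Fin n) := by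
      simp [Equiv.subtypeCongr, Equiv.sumCompl_symm_apply_of_pos (a := x) hx]
    rw [hx']
    exact (e ⟨x, hx⟩).2
  apply Finset.eq_of_subset_of_card_le
  · intro y hy
    rw [Finset.mem_smul_finset] at hy
    obtain ⟨x, hx, rfl⟩ := hy
    simpa [Equiv.Perm.smul_def] using hmem x hx
  · rw [Finset.card_smul_finset, h]

lemma conj_smul_eq {x g : Equiv.Perm (Fin n)} {s t : Finset (Fin n)}
    (hg : g • s = t) (hx : x • s = s) : (g * x * g⁻¹) • t = t := by
  rw [← hg, mul_smul, mul_smul, inv_smul_smul, hx]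

lemma conj_mem_stab {σ : Equiv.Perm (Fin n)} {s : Finset (Fin n)} {k : ℕ}
    (hs : s.card = k) (hk : k ≤ n) (hinv : σ • s = s) :
    ∃ g : Equiv.Perm (Fin n),
      g * σ * g⁻¹ ∈ MulAction.stabilizer (Equiv.Perm (Fin n)) (stdSet n k) := by
  obtain ⟨g, hg⟩ := exists_smul_eq_finset (s := s) (t := stdSet n k)
    (by rw [hs, card_stdSet, min_eq_left hk])
  exact ⟨g, conj_smul_eq hg hinv⟩

lemma exists_invariant_of_mem_cycleType {σ : Equiv.Perm (Fin n)} {l : ℕ}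
    (hl : l ∈ σ.cycleType) : ∃ s : Finset (Fin n), s.card = l ∧ σ • s = s := by
  rw [Equiv.Perm.cycleType_def, Multiset.mem_map] at hl
  obtain ⟨c, hc, rfl⟩ := hl
  rw [Finset.mem_val] at hc
  refine ⟨c.support, rfl, ?_⟩
  apply Finset.eq_of_subset_of_card_le
  · intro y hy
    rw [Finset.mem_smul_finset] at hy
    obtain ⟨x, hx, rfl⟩ := hy
    have hcx := (Equiv.Perm.mem_cycleFactorsFinset_iff.mp hc).2 x hx
    rw [Equiv.Perm.smul_def, ← hcx]
    exact Equiv.Perm.apply_mem_support.mpr hx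
  · rw [Finset.card_smul_finset]

variable {n : ℕ}

/-- the commuting "p-th power partner": `x ↦ σ ^ (len (cycle of x) / p) x`. -/
noncomputable def tau (σ : Equiv.Perm (Fin n)) (p : ℕ) : Equiv.Perm (Fin n) := by
  classical
  refine Equiv.ofBijective (fun x => (σ ^ ((σ.cycleOf x).support.card / p)) x)
    (Finite.injective_iff_bijective.mp ?_)
  intro x y hxy
  simp only at hxy
  have hsc : σ.SameCycle x y := by
    have h1 : σ.SameCycle x ((σ ^ ((σ.cycleOf x).support.card / p)) x) :=
      (Equiv.Perm.SameCycle.refl σ x).pow_right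
    rw [hxy] at h1
    exact h1.of_pow_right
  have hm : (σ.cycleOf x).support.card = (σ.cycleOf y).support.card := by
    rw [hsc.cycleOf_eq]
  rw [hm] at hxy
  exact (σ ^ ((σ.cycleOf y).support.card / p)).injective hxy

lemma tau_apply (σ : Equiv.Perm (Fin n)) (p : ℕ) (x : Fin n) :
    tau σ p x = (σ ^ ((σ.cycleOf x).support.card / p)) x := rfl

lemma tau_commute (σ : Equiv.Perm (Fin n)) (p : ℕ) : Commute σ (tau σ p) := by
  classical
  ext x
  simp only [Equiv.Perm.mul_apply, tau_apply, Equiv.Perm.cycleOf_self_apply]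
  rw [← Equiv.Perm.mul_apply, ← Equiv.Perm.mul_apply, ← pow_succ, ← pow_succ']

lemma tau_pow_apply (σ : Equiv.Perm (Fin n)) (p : ℕ) :
    ∀ (j : ℕ) (x : Fin n),
      ((tau σ p) ^ j) x = (σ ^ (j * ((σ.cycleOf x).support.card / p))) x := by
  classical
  intro j
  induction j with
  | zero => intro x; simp
  | succ j ih =>
    intro x
    rw [pow_succ', Equiv.Perm.mul_apply, tau_apply, ih]
    rw [Equiv.Perm.cycleOf_self_apply_pow, ← Equiv.Perm.mul_apply, ← pow_add]
    ring_nf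

lemma card_support_cycleOf_mem {σ : Equiv.Perm (Fin n)} {x : Fin n} (hx : σ x ≠ x) :
    (σ.cycleOf x).support.card ∈ σ.cycleType := by
  classical
  rw [Equiv.Perm.cycleType_def, Multiset.mem_map]
  exact ⟨σ.cycleOf x, Finset.mem_val.mpr
    (Equiv.Perm.cycleOf_mem_cycleFactorsFinset_iff.mpr (Equiv.Perm.mem_support.mpr hx)), rfl⟩

lemma tau_pow_eq_one {σ : Equiv.Perm (Fin n)} {p : ℕ}
    (hdvd : ∀ l ∈ σ.cycleType, p ∣ l) : (tau σ p) ^ p = 1 := by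
  classical
  ext x
  rw [tau_pow_apply, Equiv.Perm.one_apply]
  by_cases hx : σ x = x
  · have h0 : σ.cycleOf x = 1 := by rw [Equiv.Perm.cycleOf_eq_one_iff]; exact hx
    simp [h0]
  · have hc : p ∣ (σ.cycleOf x).support.card := hdvd _ (card_support_cycleOf_mem hx)
    rw [Nat.mul_div_cancel' hc]
    have h1 := Equiv.Perm.pow_mod_card_support_cycleOf_self_apply σ
      ((σ.cycleOf x).support.card) x
    rw [Nat.mod_self, pow_zero, Equiv.Perm.one_apply] at h1
    exact congrArg Fin.val h1.symm

lemma tau_fpf {σ : Equiv.Perm (Fin n)} {p : ℕ} (hp : p.Prime)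
    (hdvd : ∀ l ∈ σ.cycleType, p ∣ l) (hfpf : ∀ x, σ x ≠ x) :
    ∀ x, tau σ p x ≠ x := by
  classical
  intro x h
  rw [tau_apply] at h
  set c := (σ.cycleOf x).support.card with hc
  have hmem : c ∈ σ.cycleType := card_support_cycleOf_mem (hfpf x)
  have h2 : 2 ≤ c := Equiv.Perm.two_le_of_mem_cycleType hmem
  have hpc : p ∣ c := hdvd _ hmem
  have hxm : x ∈ (σ.cycleOf x).support := by
    rw [Equiv.Perm.mem_support_cycleOf_iff]
    exact ⟨Equiv.Perm.SameCycle.refl σ x, Equiv.Perm.mem_support.mpr (hfpf x)⟩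
  have hiff := (σ.isCycleOn_support_cycleOf x).pow_apply_eq hxm (n := c / p)
  have hdvd2 : c ∣ c / p := hiff.mp h
  have hlt : c / p < c := Nat.div_lt_self (by omega) hp.one_lt
  have hpos : 0 < c / p := Nat.div_pos (Nat.le_of_dvd (by omega) hpc) hp.pos
  exact absurd (Nat.le_of_dvd hpos hdvd2) (by omega)



lemma cycleType_of_prime_fpf {p : ℕ} {c : Equiv.Perm (Fin n)} (hp : p.Prime)
    (h1 : c ^ p = 1) (hf : ∀ x, c x ≠ x) (hn : 0 < n) :
    c.cycleType = Multiset.replicate (n / p) p := by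
  have hne : c ≠ 1 := by
    intro h
    exact hf ⟨0, hn⟩ (by simp [h])
  have horder : orderOf c = p := by
    have hd := orderOf_dvd_of_pow_eq_one h1
    rcases (Nat.Prime.eq_one_or_self_of_dvd hp _ hd) with h | h
    · exact absurd (orderOf_eq_one_iff.mp h) hne
    · exact h
  obtain ⟨m, hm⟩ := Equiv.Perm.cycleType_prime_order (horder ▸ hp)
  rw [horder] at hm
  have hsupp : c.support = Finset.univ :=
    Finset.eq_univ_iff_forall.mpr (fun x => Equiv.Perm.mem_support.mpr (hf x))
  have hsum := c.sum_cycleType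
  rw [hm, Multiset.sum_replicate, hsupp, Finset.card_univ, Fintype.card_fin,
    smul_eq_mul] at hsum
  have hdiv : m + 1 = n / p := by
    rw [← hsum, Nat.mul_div_cancel _ hp.pos]
  rw [hm, hdiv]

open Fin.NatCast in
lemma exists_cp {p : ℕ} (hp : p.Prime) (hpn : p ∣ n) (hn : 0 < n) :
    ∃ c : Equiv.Perm (Fin n), c ^ p = 1 ∧ ∀ x, c x ≠ x := by
  have hp2 : 2 ≤ p := hp.two_le
  have hmul : n / p * p = n := Nat.div_mul_cancel hpn
  haveI : NeZero p := ⟨by omega⟩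
  let e : Fin (n / p) × Fin p ≃ Fin n := finProdFinEquiv.trans (finCongr hmul)
  let r : Equiv.Perm (Fin p) := Equiv.addRight (1 : Fin p)
  let c : Equiv.Perm (Fin n) :=
    (e.symm.trans ((Equiv.prodCongr (Equiv.refl (Fin (n / p))) r).trans e))
  have hc : ∀ z : Fin n, c z = e ((e.symm z).1, (e.symm z).2 + 1) := fun z => rfl
  have key : ∀ (k : ℕ) (z : Fin n),
      (c ^ k) z = e ((e.symm z).1, (e.symm z).2 + (k : Fin p)) := by
    intro k
    induction k with
    | zero => intro z; simp
    | succ k ih =>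
      intro z
      rw [pow_succ', Equiv.Perm.mul_apply, ih z, hc]
      simp only [Equiv.symm_apply_apply]
      congr 1
      rw [Nat.cast_add, Nat.cast_one]
      rw [add_assoc]
  refine ⟨c, ?_, ?_⟩
  · ext z
    rw [key p z]
    simp [Fin.natCast_self]
  · intro z h
    rw [hc z] at h
    have := congrArg e.symm h
    rw [Equiv.symm_apply_apply] at this
    have h2 : (e.symm z).2 + 1 = (e.symm z).2 := congrArg Prod.snd this
    have h3 : (1 : Fin p) = 0 := by
      have h4 : (e.symm z).2 + 1 = (e.symm z).2 + 0 := by rw [add_zero]; exact h2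
      exact add_left_cancel h4
    have h5 : (1 : Fin p) ≠ 0 := by
      intro hcon
      have h6 := congrArg Fin.val hcon
      rw [Fin.val_one', Fin.val_zero, Nat.mod_eq_of_lt (by omega)] at h6
      exact one_ne_zero h6
    exact h5 h3

/-- a fixed fixed-point-free permutation of order `p` (when `p` is a prime dividing `n`). -/
noncomputable def cp (n p : ℕ) : Equiv.Perm (Fin n) := by
  classical
  exact if h : p.Prime ∧ p ∣ n ∧ 0 < n then (exists_cp h.1 h.2.1 h.2.2).choose else 1

lemma cp_spec {p : ℕ} (hp : p.Prime) (hpn : p ∣ n) (hn : 0 < n) :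
    (cp n p) ^ p = 1 ∧ ∀ x, (cp n p) x ≠ x := by
  rw [cp]
  rw [dif_pos ⟨hp, hpn, hn⟩]
  exact (exists_cp hp hpn hn).choose_spec

/-- the "wreath-like" subgroup: centralizer of `cp n p`. -/
noncomputable def W (n p : ℕ) : Subgroup (Equiv.Perm (Fin n)) :=
  Subgroup.centralizer {cp n p}

lemma mem_W_of_commute {p : ℕ} {x : Equiv.Perm (Fin n)}
    (h : Commute (cp n p) x) : x ∈ W n p := by
  rw [W, Subgroup.mem_centralizer_iff]
  intro y hy
  rw [Set.mem_singleton_iff] at hy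
  rw [hy]
  exact h

lemma conj_commute_mem_W {p : ℕ} (hp : p.Prime) (hpn : p ∣ n) (hn : 0 < n)
    {t : Equiv.Perm (Fin n)} (h1 : t ^ p = 1) (h2 : ∀ x, t x ≠ x) :
    ∃ g : Equiv.Perm (Fin n),
      ∀ x : Equiv.Perm (Fin n), Commute t x → g * x * g⁻¹ ∈ W n p := by
  obtain ⟨hcp1, hcp2⟩ := cp_spec (n := n) hp hpn hn
  have htype : t.cycleType = (cp n p).cycleType := by
    rw [cycleType_of_prime_fpf hp h1 h2 hn, cycleType_of_prime_fpf hp hcp1 hcp2 hn]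
  obtain ⟨g, hg⟩ := isConj_iff.mp (Equiv.Perm.isConj_of_cycleType_eq htype)
  refine ⟨g, fun x hcomm => ?_⟩
  apply mem_W_of_commute
  rw [← hg]
  have h3 := hcomm.map (MulAut.conj g).toMonoidHom
  simpa [MulAut.conj_apply, MulEquiv.coe_toMonoidHom, div_eq_mul_inv] using h3

lemma conj_mem_W {σ : Equiv.Perm (Fin n)} {p : ℕ} (hp : p.Prime) (hpn : p ∣ n)
    (hn : 0 < n) (hfpf : ∀ x, σ x ≠ x) (hdvd : ∀ l ∈ σ.cycleType, p ∣ l) :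
    ∃ g : Equiv.Perm (Fin n), g * σ * g⁻¹ ∈ W n p := by
  obtain ⟨g, hg⟩ := conj_commute_mem_W hp hpn hn (tau_pow_eq_one hdvd)
    (tau_fpf hp hdvd hfpf)
  exact ⟨g, hg σ (tau_commute σ p).symm⟩

lemma W_ne_top {p : ℕ} (hp : p.Prime) (hpn : p ∣ n) (hn : 3 ≤ n) : W n p ≠ ⊤ := by
  obtain ⟨h1, h2⟩ := cp_spec (n := n) hp hpn (by omega)
  set c := cp n p with hcdef
  set a : Fin n := ⟨0, by omega⟩ with ha
  set b := c a with hb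
  have hab : b ≠ a := h2 a
  have hd : ∃ d : Fin n, d ≠ a ∧ d ≠ b := by
    by_contra hcon
    push_neg at hcon
    have hcard : (Finset.univ : Finset (Fin n)).card ≤ ({a, b} : Finset (Fin n)).card := by
      apply Finset.card_le_card
      intro x _
      rcases eq_or_ne x a with h | h
      · simp [h]
      · simp [hcon x h]
    rw [Finset.card_univ, Fintype.card_fin] at hcard
    have : ({a, b} : Finset (Fin n)).card ≤ 2 := Finset.card_insert_le _ _ |>.trans (by simp)
    omega
  obtain ⟨d, hda, hdb⟩ := hd
  intro htop
  have hg : Equiv.swap b d ∈ W n p := htop ▸ Subgroup.mem_top _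
  rw [W, Subgroup.mem_centralizer_iff] at hg
  have heq := hg c (Set.mem_singleton _)
  have happ := congrArg (fun f : Equiv.Perm (Fin n) => f a) heq
  simp only [Equiv.Perm.mul_apply] at happ
  rw [Equiv.swap_apply_of_ne_of_ne hab.symm (Ne.symm hda), ← hb,
    Equiv.swap_apply_left] at happ
  exact hdb happ.symm
lemma stab_ne_top {k : ℕ} (h1 : 1 ≤ k) (h2 : k < n) :
    MulAction.stabilizer (Equiv.Perm (Fin n)) (stdSet n k) ≠ ⊤ := by
  intro htop
  set a : Fin n := ⟨0, by omega⟩ with hadef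
  set b : Fin n := ⟨k, h2⟩ with hbdef
  have ha : a ∈ stdSet n k := mem_stdSet.mpr (lt_min_iff.mpr ⟨h1, by omega⟩)
  have hb : b ∉ stdSet n k := by
    have hbv : (b : ℕ) = k := rfl
    rw [mem_stdSet, hbv]
    omega
  have hg : Equiv.swap a b ∈ MulAction.stabilizer (Equiv.Perm (Fin n)) (stdSet n k) :=
    htop ▸ Subgroup.mem_top _
  rw [MulAction.mem_stabilizer_iff] at hg
  have : Equiv.swap a b • a ∈ Equiv.swap a b • stdSet n k :=
    Finset.smul_mem_smul_finset ha
  rw [hg, Equiv.Perm.smul_def, Equiv.swap_apply_left] at this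
  exact hb this

lemma alternating_ne_top (hn : 2 ≤ n) : alternatingGroup (Fin n) ≠ ⊤ := by
  intro htop
  set a : Fin n := ⟨0, by omega⟩
  set b : Fin n := ⟨1, by omega⟩
  have hab : a ≠ b := by simp [Fin.ext_iff]
  have hg : Equiv.swap a b ∈ alternatingGroup (Fin n) := htop ▸ Subgroup.mem_top _
  rw [Equiv.Perm.mem_alternatingGroup, Equiv.Perm.sign_swap hab] at hg
  exact absurd hg (by decide)

lemma phiI_eq_card (bnd : ℕ) (hb : 0 < bnd) :
    phiI ((n : ℚ) / bnd) ((n : ℚ) / 2) n =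
      ((Finset.range n).filter
        (fun k => Nat.Coprime k n ∧ 2 * k < n ∧ n < bnd * k)).card := by
  classical
  rw [phiI]
  have hb0 : (0:ℚ) < (bnd:ℚ) := by exact_mod_cast hb
  have hset : {i : ℕ | 0 < i ∧ (n : ℚ)/(bnd:ℚ) < i ∧ (i : ℚ) < (n:ℚ)/2 ∧ Nat.Coprime i n}
      = ↑((Finset.range n).filter
          (fun k => Nat.Coprime k n ∧ 2 * k < n ∧ n < bnd * k)) := by
    ext i
    simp only [Set.mem_setOf_eq, Finset.coe_filter, Finset.mem_range, Set.mem_setOf_eq]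
    constructor
    · rintro ⟨h0, h1, h2, h3⟩
      have h1' : (n:ℚ) < bnd * i := by
        rw [div_lt_iff₀ hb0] at h1
        linarith
      have h2' : (2:ℚ) * i < n := by
        rw [lt_div_iff₀ (by norm_num : (0:ℚ) < 2)] at h2
        linarith
      have h1n : n < bnd * i := by exact_mod_cast h1'
      have h2n : 2 * i < n := by exact_mod_cast h2'
      exact ⟨by omega, h3, h2n, h1n⟩
    · rintro ⟨hin, h3, h2, h1⟩
      have h0 : 0 < i := by
        rcases Nat.eq_zero_or_pos i with h | h
        · subst h; simp at h1
        · exact h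
      refine ⟨h0, ?_, ?_, h3⟩
      · rw [div_lt_iff₀ hb0]
        have : (n:ℚ) < (bnd:ℚ) * (i:ℚ) := by exact_mod_cast h1
        linarith
      · rw [lt_div_iff₀ (by norm_num : (0:ℚ) < 2)]
        have : (2:ℚ) * (i:ℚ) < (n:ℚ) := by exact_mod_cast h2
        linarith
  rw [hset, Nat.card_coe_set_eq, Set.ncard_coe_finset]

def Kc (n bnd : ℕ) : Finset ℕ :=
  (Finset.range n).filter (fun k => Nat.Coprime k n ∧ 2 * k < n ∧ n < bnd * k)

def stabS (n k : ℕ) : Subgroup (Equiv.Perm (Fin n)) :=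
  MulAction.stabilizer (Equiv.Perm (Fin n)) (stdSet n k)

lemma cover_main {bnd : ℕ} (hn : 4 ≤ n) (hbnd : bnd = 3 ∨ bnd = 4)
    (σ : Equiv.Perm (Fin n)) (hsign : bnd = 4 → ¬ Even n ∧ Equiv.Perm.sign σ = -1) :
    (∃ k ∈ Finset.Icc 1 (n / bnd) ∪ Kc n bnd, ∃ g, g * σ * g⁻¹ ∈ stabS n k) ∨
    (∃ p ∈ n.primeFactors, ∃ g, g * σ * g⁻¹ ∈ W n p) := by
  classical
  have hnb1 : 1 ≤ n / bnd := by rcases hbnd with h | h <;> (subst h; omega)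
  by_cases hfix : ∃ x, σ x = x
  · obtain ⟨x, hx⟩ := hfix
    left
    refine ⟨1, Finset.mem_union_left _ (Finset.mem_Icc.mpr ⟨le_refl 1, hnb1⟩), ?_⟩
    have hinv : σ • ({x} : Finset (Fin n)) = {x} := by
      rw [Finset.smul_finset_singleton]
      simp [Equiv.Perm.smul_def, hx]
    exact conj_mem_stab (Finset.card_singleton x) (by omega) hinv
  · push_neg at hfix
    by_cases hsmall : ∃ l ∈ σ.cycleType, l ≤ n / bnd
    · obtain ⟨l, hl, hll⟩ := hsmall
      left
      have h2l : 2 ≤ l := Equiv.Perm.two_le_of_mem_cycleType hl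
      obtain ⟨s, hcard, hinv⟩ := exists_invariant_of_mem_cycleType hl
      refine ⟨l, Finset.mem_union_left _ (Finset.mem_Icc.mpr ⟨by omega, hll⟩), ?_⟩
      exact conj_mem_stab hcard (le_trans hll (Nat.div_le_self n bnd)) hinv
    · push_neg at hsmall
      have hsupp : σ.support = Finset.univ :=
        Finset.eq_univ_iff_forall.mpr (fun x => Equiv.Perm.mem_support.mpr (hfix x))
      have hsum : σ.cycleType.sum = n := by
        rw [Equiv.Perm.sum_cycleType, hsupp, Finset.card_univ, Fintype.card_fin]
      have hcardmul : Multiset.card σ.cycleType * (n / bnd + 1) ≤ n := by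
        have h := Multiset.card_nsmul_le_sum (s := σ.cycleType) (a := n / bnd + 1)
          (fun x hx => hsmall x hx)
        rwa [smul_eq_mul, hsum] at h
      have hbnd2 : n < bnd * (n / bnd + 1) := by
        rcases hbnd with h | h <;> (subst h; omega)
      have hr : Multiset.card σ.cycleType < bnd := by
        by_contra hcon
        push_neg at hcon
        have : bnd * (n / bnd + 1) ≤ Multiset.card σ.cycleType * (n / bnd + 1) :=
          Nat.mul_le_mul_right _ hcon
        omega
      have hne : σ ≠ 1 := by
        intro h
        exact hfix ⟨0, by omega⟩ (by simp [h])
      have hr0 : Multiset.card σ.cycleType ≠ 0 := by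
        simpa [Equiv.Perm.card_cycleType_eq_zero] using hne
      have goW : ∀ p : ℕ, p.Prime → p ∣ n → (∀ l ∈ σ.cycleType, p ∣ l) →
          (∃ p ∈ n.primeFactors, ∃ g, g * σ * g⁻¹ ∈ W n p) := by
        intro p hp hpn hdvd
        obtain ⟨g, hg⟩ := conj_mem_W hp hpn (by omega) hfix hdvd
        exact ⟨p, Nat.mem_primeFactors.mpr ⟨hp, hpn, by omega⟩, g, hg⟩
      have hstab : ∀ a : ℕ, a ∈ σ.cycleType → a ∈ Kc n bnd →
          (∃ k ∈ Finset.Icc 1 (n / bnd) ∪ Kc n bnd, ∃ g, g * σ * g⁻¹ ∈ stabS n k) := by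
        intro a ha haK
        obtain ⟨s, hcard, hinv⟩ := exists_invariant_of_mem_cycleType ha
        have han : a < n := Finset.mem_range.mp (Finset.mem_filter.mp haK).1
        exact ⟨a, Finset.mem_union_right _ haK, conj_mem_stab hcard (by omega) hinv⟩
      have hmain2 : ∀ a b : ℕ, σ.cycleType = {a, b} → a ≤ b →
          (∃ k ∈ Finset.Icc 1 (n / bnd) ∪ Kc n bnd, ∃ g, g * σ * g⁻¹ ∈ stabS n k) ∨
          (∃ p ∈ n.primeFactors, ∃ g, g * σ * g⁻¹ ∈ W n p) := by
        intro a b hT hab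
        have hmema : a ∈ σ.cycleType := by rw [hT]; simp
        have hmemb : b ∈ σ.cycleType := by rw [hT]; simp
        have h2a : 2 ≤ a := Equiv.Perm.two_le_of_mem_cycleType hmema
        have h2b : 2 ≤ b := Equiv.Perm.two_le_of_mem_cycleType hmemb
        have habn : a + b = n := by
          have := hsum
          rw [hT] at this
          simpa using this
        have hgta : n / bnd < a := hsmall a hmema
        by_cases hco : Nat.Coprime a n
        · left
          have hne' : a ≠ b := by
            intro h
            subst h
            have hdvd : a ∣ n := ⟨2, by omega⟩
            have := Nat.Coprime.eq_one_of_dvd hco hdvd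
            omega
          have h2an : 2 * a < n := by omega
          have hna : n < bnd * a := by
            rcases hbnd with h | h <;> (subst h; omega)
          exact hstab a hmema (Finset.mem_filter.mpr
            ⟨Finset.mem_range.mpr (by omega), hco, h2an, hna⟩)
        · right
          set d := Nat.gcd a n with hd
          have hd1 : d ≠ 1 := hco
          have hd0 : d ≠ 0 := by
            intro h
            have := Nat.eq_zero_of_gcd_eq_zero_left (hd ▸ h)
            omega
          set p := d.minFac with hpd
          have hp : p.Prime := Nat.minFac_prime hd1
          have hpa : p ∣ a := dvd_trans (Nat.minFac_dvd d) (Nat.gcd_dvd_left a n)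
          have hpn : p ∣ n := dvd_trans (Nat.minFac_dvd d) (Nat.gcd_dvd_right a n)
          have hpb : p ∣ b := by
            have : b = n - a := by omega
            rw [this]
            exact Nat.dvd_sub hpn hpa
          apply goW p hp hpn
          intro l hl
          rw [hT] at hl
          rcases Multiset.mem_cons.mp hl with h | h
          · rw [h]; exact hpa
          · rw [Multiset.mem_singleton.mp h]; exact hpb
      rcases (show Multiset.card σ.cycleType = 1 ∨ Multiset.card σ.cycleType = 2 ∨
          Multiset.card σ.cycleType = 3 by
            rcases hbnd with h | h <;> omega) with h1 | h2 | h3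
      · obtain ⟨a, hT⟩ := Multiset.card_eq_one.mp h1
        have han : a = n := by
          have := hsum
          rw [hT] at this
          simpa using this
        right
        apply goW n.minFac (Nat.minFac_prime (by omega)) (Nat.minFac_dvd n)
        intro l hl
        rw [hT, Multiset.mem_singleton] at hl
        rw [hl, han]
        exact Nat.minFac_dvd n
      · obtain ⟨a, b, hT⟩ := Multiset.card_eq_two.mp h2
        rcases le_total a b with hab | hab
        · exact hmain2 a b hT hab
        · exact hmain2 b a (by rw [hT]; exact Multiset.cons_swap a b 0) hab
      · exfalso
        have h4 : bnd = 4 := by rcases hbnd with h | h <;> omega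
        obtain ⟨hodd, hsg⟩ := hsign h4
        have hsgn := Equiv.Perm.sign_of_cycleType σ
        rw [hsum, h3, hsg] at hsgn
        have heven : Even (n + 3) := by
          rcases Nat.even_or_odd n with h | h
          · exact absurd h hodd
          · obtain ⟨m, hm⟩ := h
            exact ⟨m + 2, by omega⟩
        rw [heven.neg_one_pow] at hsgn
        exact absurd hsgn (by decide)

lemma metacyclic_stab {σ τ : Equiv.Perm (Fin n)} {a b : Fin n} (hab : a ≠ b)
    (hτ : τ = Equiv.swap a b) (hcomm : Commute σ τ) :
    ∀ x ∈ Subgroup.closure ({σ, τ} : Set (Equiv.Perm (Fin n))),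
      x • ({a, b} : Finset (Fin n)) = {a, b} := by
  classical
  intro x hx
  have pairsmul : ∀ g : Equiv.Perm (Fin n),
      g • ({a, b} : Finset (Fin n)) = {g a, g b} := by
    intro g
    rw [Finset.smul_finset_insert, Finset.smul_finset_singleton]
    simp [Equiv.Perm.smul_def]
  have hsub : Subgroup.closure ({σ, τ} : Set (Equiv.Perm (Fin n)))
      ≤ MulAction.stabilizer (Equiv.Perm (Fin n)) ({a, b} : Finset (Fin n)) := by
    rw [Subgroup.closure_le]
    intro y hy
    simp only [Set.mem_insert_iff, Set.mem_singleton_iff] at hy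
    rcases hy with rfl | rfl
    · rw [SetLike.mem_coe, MulAction.mem_stabilizer_iff, pairsmul]
      have hkey : τ (y a) = y b := by
        have h1 := congrArg (fun f : Equiv.Perm (Fin n) => f a) hcomm.eq
        simp only [Equiv.Perm.mul_apply] at h1
        rw [hτ, Equiv.swap_apply_left] at h1
        rw [hτ]
        exact h1.symm
      by_cases h1 : y a = a
      · rw [h1, hτ, Equiv.swap_apply_left] at hkey
        rw [h1, ← hkey]
      · by_cases h2 : y a = b
        · rw [h2, hτ, Equiv.swap_apply_right] at hkey
          rw [h2, ← hkey, Finset.pair_comm]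
        · exfalso
          rw [hτ, Equiv.swap_apply_of_ne_of_ne h1 h2] at hkey
          exact hab (y.injective hkey)
    · rw [SetLike.mem_coe, MulAction.mem_stabilizer_iff, pairsmul, hτ,
        Equiv.swap_apply_left, Equiv.swap_apply_right, Finset.pair_comm]
  exact hsub hx

lemma stab_pair_mem_W_four (hn : n = 4) {a b : Fin n} (hab : a ≠ b) :
    ∃ g : Equiv.Perm (Fin n), ∀ x : Equiv.Perm (Fin n),
      x • ({a, b} : Finset (Fin n)) = {a, b} → g * x * g⁻¹ ∈ W n 2 := by
  classical
  have hcompl : ({a, b} : Finset (Fin n))ᶜ.card = 2 := by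
    rw [Finset.card_compl, Finset.card_pair hab]
    simp [hn]
  obtain ⟨c, d, hcd, hcdef⟩ := Finset.card_eq_two.mp hcompl
  have hc : c ∉ ({a, b} : Finset (Fin n)) := by
    rw [← Finset.mem_compl, hcdef]; simp
  have hd : d ∉ ({a, b} : Finset (Fin n)) := by
    rw [← Finset.mem_compl, hcdef]; simp
  have hca : c ≠ a := by intro h; apply hc; simp [h]
  have hcb : c ≠ b := by intro h; apply hc; simp [h]
  have hda : d ≠ a := by intro h; apply hd; simp [h]
  have hdb : d ≠ b := by intro h; apply hd; simp [h]
  set w := Equiv.swap a b * Equiv.swap c d with hwdef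
  have hdisj : Equiv.Perm.Disjoint (Equiv.swap a b) (Equiv.swap c d) := by
    intro x
    by_cases hx1 : x = a
    · right; subst hx1; exact Equiv.swap_apply_of_ne_of_ne (Ne.symm hca) (Ne.symm hda)
    · by_cases hx2 : x = b
      · right; subst hx2; exact Equiv.swap_apply_of_ne_of_ne (Ne.symm hcb) (Ne.symm hdb)
      · left; exact Equiv.swap_apply_of_ne_of_ne hx1 hx2
  have hcomm' : Commute (Equiv.swap a b) (Equiv.swap c d) := hdisj.commute
  have hw2 : w ^ 2 = 1 := by
    rw [pow_two, hwdef, Commute.mul_mul_mul_comm hcomm'.symm]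
    simp [Equiv.swap_mul_self]
  have hwf : ∀ x, w x ≠ x := by
    intro x
    have hx4 : x = a ∨ x = b ∨ x = c ∨ x = d := by
      by_cases hx : x ∈ ({a, b} : Finset (Fin n))
      · rcases Finset.mem_insert.mp hx with h | h
        · exact Or.inl h
        · exact Or.inr (Or.inl (Finset.mem_singleton.mp h))
      · have : x ∈ ({a, b} : Finset (Fin n))ᶜ := Finset.mem_compl.mpr hx
        rw [hcdef] at this
        rcases Finset.mem_insert.mp this with h | h
        · exact Or.inr (Or.inr (Or.inl h))
        · exact Or.inr (Or.inr (Or.inr (Finset.mem_singleton.mp h)))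
    rcases hx4 with rfl | rfl | rfl | rfl
    · rw [hwdef, Equiv.Perm.mul_apply,
        Equiv.swap_apply_of_ne_of_ne (Ne.symm hca) (Ne.symm hda),
        Equiv.swap_apply_left]
      exact Ne.symm hab
    · rw [hwdef, Equiv.Perm.mul_apply,
        Equiv.swap_apply_of_ne_of_ne (Ne.symm hcb) (Ne.symm hdb),
        Equiv.swap_apply_right]
      exact hab
    · rw [hwdef, Equiv.Perm.mul_apply, Equiv.swap_apply_left,
        Equiv.swap_apply_of_ne_of_ne hda hdb]
      exact Ne.symm hcd
    · rw [hwdef, Equiv.Perm.mul_apply, Equiv.swap_apply_right,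
        Equiv.swap_apply_of_ne_of_ne hca hcb]
      exact hcd
  obtain ⟨g, hg⟩ := conj_commute_mem_W (n := n) (p := 2) Nat.prime_two
    (by rw [hn]; norm_num) (by omega) hw2 hwf
  refine ⟨g, fun x hx => hg x ?_⟩
  -- show Commute w x
  have hmem : ∀ y : Fin n, x y ∈ ({a, b} : Finset (Fin n)) ↔ y ∈ ({a, b} : Finset (Fin n)) := by
    intro y
    constructor
    · intro hy
      rw [← hx, Finset.mem_smul_finset] at hy
      obtain ⟨z, hz, hzy⟩ := hy
      rw [Equiv.Perm.smul_def] at hzy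
      rwa [← x.injective hzy]
    · intro hy
      rw [← hx]
      exact Finset.smul_mem_smul_finset hy
  have swap_eq : ∀ (u v s t : Fin n), u ≠ v → (u = s ∨ u = t) → (v = s ∨ v = t) →
      Equiv.swap u v = Equiv.swap s t := by
    intro u v s t huv hu hv
    rcases hu with rfl | rfl
    · rcases hv with rfl | rfl
      · exact absurd rfl huv
      · rfl
    · rcases hv with rfl | rfl
      · exact Equiv.swap_comm _ _
      · exact absurd rfl huv
  have hxa : x a = a ∨ x a = b := by
    have := (hmem a).mpr (by simp)
    rcases Finset.mem_insert.mp this with h | h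
    · exact Or.inl h
    · exact Or.inr (Finset.mem_singleton.mp h)
  have hxb : x b = a ∨ x b = b := by
    have := (hmem b).mpr (by simp)
    rcases Finset.mem_insert.mp this with h | h
    · exact Or.inl h
    · exact Or.inr (Finset.mem_singleton.mp h)
  have hcompl_mem : ∀ y : Fin n, y ∉ ({a, b} : Finset (Fin n)) → (x y = c ∨ x y = d) := by
    intro y hy
    have : x y ∉ ({a, b} : Finset (Fin n)) := fun h => hy ((hmem y).mp h)
    have h2 : x y ∈ ({a, b} : Finset (Fin n))ᶜ := Finset.mem_compl.mpr this
    rw [hcdef] at h2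
    rcases Finset.mem_insert.mp h2 with h | h
    · exact Or.inl h
    · exact Or.inr (Finset.mem_singleton.mp h)
  have hxc := hcompl_mem c hc
  have hxd := hcompl_mem d hd
  have hswab : Equiv.swap (x a) (x b) = Equiv.swap a b :=
    swap_eq _ _ _ _ (fun h => hab (x.injective h)) hxa hxb
  have hswcd : Equiv.swap (x c) (x d) = Equiv.swap c d :=
    swap_eq _ _ _ _ (fun h => hcd (x.injective h)) hxc hxd
  have hconj : x * w * x⁻¹ = w := by
    rw [hwdef]
    have h1 : x * (Equiv.swap a b * Equiv.swap c d) * x⁻¹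
        = (x * Equiv.swap a b * x⁻¹) * (x * Equiv.swap c d * x⁻¹) := by
      group
    rw [h1, ← Equiv.swap_apply_apply, ← Equiv.swap_apply_apply, hswab, hswcd]
  have : x * w = w * x := by
    have := congrArg (fun z => z * x) hconj
    simpa [mul_assoc] using this
  exact this.symm

lemma build (hn : 4 ≤ n) (bnd : ℕ) (hbnd : bnd = 3 ∨ bnd = 4)
    (hpar : bnd = 4 ↔ ¬ Even n) :
    ∃ δ : Finset (Subgroup (Equiv.Perm (Fin n))), IsSpecialBasicSet δ ∧
      δ.card ≤ n / bnd + (Kc n bnd).card + nuFun n + (if bnd = 4 then 1 else 0) := by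
  classical
  set K := Finset.Icc 1 (n / bnd) ∪ Kc n bnd with hK
  set δ : Finset (Subgroup (Equiv.Perm (Fin n))) :=
    (K.image (stabS n) ∪ n.primeFactors.image (W n)) ∪
      (if bnd = 4 then {alternatingGroup (Fin n)} else ∅) with hδ
  have hKbound : ∀ k ∈ K, 1 ≤ k ∧ k < n := by
    intro k hk
    rcases Finset.mem_union.mp hk with h | h
    · have h2 := Finset.mem_Icc.mp h
      rcases hbnd with hb | hb <;> (subst hb; omega)
    · have h2 := Finset.mem_filter.mp h
      obtain ⟨-, -, h3, h4⟩ := h2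
      rcases hbnd with hb | hb <;> (subst hb; omega)
  have coverSmall : ∀ σ : Equiv.Perm (Fin n), (bnd = 4 → Equiv.Perm.sign σ = -1) →
      ∃ H ∈ δ, ∃ g, g * σ * g⁻¹ ∈ H := by
    intro σ hsg
    rcases cover_main hn hbnd σ (fun h4 => ⟨hpar.mp h4, hsg h4⟩) with
      ⟨k, hk, g, hg⟩ | ⟨p, hp, g, hg⟩
    · exact ⟨stabS n k, Finset.mem_union_left _
        (Finset.mem_union_left _ (Finset.mem_image_of_mem _ hk)), g, hg⟩
    · exact ⟨W n p, Finset.mem_union_left _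
        (Finset.mem_union_right _ (Finset.mem_image_of_mem _ hp)), g, hg⟩
  have coverAll : ∀ σ : Equiv.Perm (Fin n), ∃ H ∈ δ, ∃ g, g * σ * g⁻¹ ∈ H := by
    intro σ
    by_cases h4 : bnd = 4
    · by_cases hsg : Equiv.Perm.sign σ = 1
      · refine ⟨alternatingGroup (Fin n), ?_, 1, ?_⟩
        · apply Finset.mem_union_right
          simp [h4]
        · simpa [Equiv.Perm.mem_alternatingGroup] using hsg
      · rcases Int.units_eq_one_or (Equiv.Perm.sign σ) with h | h
        · exact absurd h hsg
        · exact coverSmall σ (fun _ => h)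
    · exact coverSmall σ (fun h => absurd h h4)
  have hproper : ∀ H ∈ δ, H ≠ ⊤ := by
    intro H hH
    rcases Finset.mem_union.mp hH with hH' | hH'
    · rcases Finset.mem_union.mp hH' with hH'' | hH''
      · obtain ⟨k, hk, rfl⟩ := Finset.mem_image.mp hH''
        obtain ⟨hk1, hk2⟩ := hKbound k hk
        exact stab_ne_top hk1 hk2
      · obtain ⟨p, hp, rfl⟩ := Finset.mem_image.mp hH''
        exact W_ne_top (Nat.prime_of_mem_primeFactors hp)
          (Nat.dvd_of_mem_primeFactors hp) (by omega)
    · have h4 : bnd = 4 := by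
        by_contra h
        simp [h] at hH'
      rw [if_pos h4, Finset.mem_singleton] at hH'
      subst hH'
      exact alternating_ne_top (by omega)
  have hspecial : IsSpecialBasicSet δ := by
    refine ⟨⟨hproper, coverAll⟩, ?_⟩
    intro M hM
    have conj_zpow : ∀ (g c : Equiv.Perm (Fin n)) (i : ℤ),
        g * c ^ i * g⁻¹ = (g * c * g⁻¹) ^ i := by
      intro g c i
      have h := map_zpow (MulAut.conj g) c i
      simpa [MulAut.conj_apply, div_eq_mul_inv] using h.symm
    rcases hM with hM | hM
    · obtain ⟨g₀, hg₀⟩ := hM.exists_generator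
      obtain ⟨H, hHδ, g, hg⟩ := coverAll (g₀ : Equiv.Perm (Fin n))
      refine ⟨H, hHδ, g, fun x hx => ?_⟩
      obtain ⟨i, hi⟩ := Subgroup.mem_zpowers_iff.mp (hg₀ ⟨x, hx⟩)
      have hi' : ((g₀ : Equiv.Perm (Fin n)) ^ i) = x := by
        have := congrArg (Subtype.val) hi
        simpa using this
      rw [← hi', conj_zpow]
      exact Subgroup.zpow_mem H hg i
    · obtain ⟨σ, τ, hswap, _, hcomm, _, hMdef⟩ := hM
      obtain ⟨a, b, hab, hτ⟩ := hswap
      have hstab := metacyclic_stab hab hτ hcomm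
      by_cases h4n : n = 4
      · obtain ⟨g, hg⟩ := stab_pair_mem_W_four h4n hab
        refine ⟨W n 2, ?_, g, fun x hx => hg x (hstab x (by rwa [← hMdef]))⟩
        apply Finset.mem_union_left
        apply Finset.mem_union_right
        apply Finset.mem_image_of_mem
        exact Nat.mem_primeFactors.mpr ⟨Nat.prime_two, by rw [h4n]; norm_num, by omega⟩
      · have h2K : 2 ∈ K := by
          rcases hbnd with hb | hb
          · have heven : Even n := by
              by_contra h
              have h2 := hpar.mpr h
              omega
            obtain ⟨m, hm⟩ := heven
            subst hb
            apply Finset.mem_union_left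
            rw [Finset.mem_Icc]
            omega
          · have hodd : ¬ Even n := hpar.mp hb
            have hodd' : Odd n := Nat.not_even_iff_odd.mp hodd
            obtain ⟨m, hm⟩ := hodd'
            subst hb
            by_cases hn8 : 8 ≤ n
            · apply Finset.mem_union_left
              rw [Finset.mem_Icc]
              omega
            · apply Finset.mem_union_right
              rw [Kc, Finset.mem_filter, Finset.mem_range]
              refine ⟨by omega, ?_, by omega, by omega⟩
              exact Nat.coprime_two_left.mpr ⟨m, hm⟩
        obtain ⟨g, hg⟩ := exists_smul_eq_finset (s := ({a, b} : Finset (Fin n)))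
          (t := stdSet n 2)
          (by rw [Finset.card_pair hab, card_stdSet, min_eq_left (by omega)])
        refine ⟨stabS n 2, Finset.mem_union_left _
          (Finset.mem_union_left _ (Finset.mem_image_of_mem _ h2K)), g,
          fun x hx => ?_⟩
        exact conj_smul_eq hg (hstab x (by rwa [← hMdef]))
  refine ⟨δ, hspecial, ?_⟩
  calc δ.card ≤ (K.image (stabS n) ∪ n.primeFactors.image (W n)).card +
        (if bnd = 4 then ({alternatingGroup (Fin n)} : Finset _) else ∅).card :=
        Finset.card_union_le _ _
    _ ≤ (K.image (stabS n)).card + (n.primeFactors.image (W n)).card +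
        (if bnd = 4 then 1 else 0) := by
        have h1 : (if bnd = 4 then ({alternatingGroup (Fin n)} : Finset _) else ∅).card =
            (if bnd = 4 then 1 else 0) := by
          split <;> simp
        rw [h1]
        exact Nat.add_le_add_right (Finset.card_union_le _ _) _
    _ ≤ K.card + nuFun n + (if bnd = 4 then 1 else 0) := by
        have h2 : (K.image (stabS n)).card ≤ K.card := Finset.card_image_le
        have h3 : (n.primeFactors.image (W n)).card ≤ nuFun n := by
          rw [nuFun]
          exact Finset.card_image_le
        omega
    _ ≤ n / bnd + (Kc n bnd).card + nuFun n + (if bnd = 4 then 1 else 0) := by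
        have h4 : K.card ≤ n / bnd + (Kc n bnd).card := by
          refine le_trans (Finset.card_union_le _ _) ?_
          have h5 : (Finset.Icc 1 (n / bnd)).card = n / bnd := by
            rw [Nat.card_Icc]
            simp
          omega
        omega

end GammaAux

/-- For every `n ≥ 4`, `γ'(Sₙ) ≤ h(n)`. -/
theorem gamma'_le_h (n : ℕ) (hn : 4 ≤ n) : specialNormalCoveringNumber n ≤ hFun n := by
  classical
  by_cases he : Even n
  · obtain ⟨δ, hδ, hcard⟩ := GammaAux.build hn 3 (Or.inl rfl)
      (iff_of_false (by omega) (not_not_intro he))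
    have hphi : phiI ((n : ℚ) / 3) ((n : ℚ) / 2) n = (GammaAux.Kc n 3).card := by
      have h := GammaAux.phiI_eq_card (n := n) 3 (by norm_num)
      have hc : ((3 : ℕ) : ℚ) = (3 : ℚ) := by norm_num
      rw [hc] at h
      exact h
    have hH : hFun n = n / 3 + nuFun n + (GammaAux.Kc n 3).card := by
      rw [hFun, if_pos he, hphi]
    refine le_trans (Nat.sInf_le ⟨δ, hδ, rfl⟩) ?_
    rw [hH]
    have h0 : (if (3 : ℕ) = 4 then 1 else 0) = 0 := rfl
    rw [h0] at hcard
    omega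
  · obtain ⟨δ, hδ, hcard⟩ := GammaAux.build hn 4 (Or.inr rfl)
      (iff_of_true rfl he)
    have hphi : phiI ((n : ℚ) / 4) ((n : ℚ) / 2) n = (GammaAux.Kc n 4).card := by
      have h := GammaAux.phiI_eq_card (n := n) 4 (by norm_num)
      have hc : ((4 : ℕ) : ℚ) = (4 : ℚ) := by norm_num
      rw [hc] at h
      exact h
    have hH : hFun n = n / 4 + nuFun n + (GammaAux.Kc n 4).card + 1 := by
      rw [hFun, if_neg he, hphi]
    refine le_trans (Nat.sInf_le ⟨δ, hδ, rfl⟩) ?_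
    rw [hH]
    have h0 : (if (4 : ℕ) = 4 then 1 else 0) = 1 := rfl
    rw [h0] at hcard
    omega
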